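/- For the 1-bit sign compressor C[x] = (‖x‖₁/d)·sign(x) on ℝ^d, the relative error satisfies ‖x - C[x]‖²/‖x‖² = 1 - ‖x‖₁²/(d‖x‖²) ≤ 1 - 1/d, with equality in the upper bound iff x is supported on a single coordinate, and the error is 0 iff all coordinates of x have equal absolute value. -/

import Mathlib

/-- Relative error of the 1-bit sign compressor:
`‖x - C[x]‖²/‖x‖² = 1 - ‖x‖₁²/(d‖x‖²) ≤ 1 - 1/d`, with equality in the upper
bound iff `x` is supported on a single coordinate, and zero error iff all
coordinates have equal absolute value. -/
theorem one_bit_compression_relative_error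
    (d : ℕ) (hd : 0 < d) (x s : EuclideanSpace ℝ (Fin d)) (hx : x ≠ 0)
    (hs : ∀ i, s i = 1 ∨ s i = -1) (hsx : ∀ i, s i * x i = |x i|) :
    ∀ Cx : EuclideanSpace ℝ (Fin d), Cx = ((∑ i, |x i|) / (d : ℝ)) • s →
      ‖x - Cx‖ ^ 2 / ‖x‖ ^ 2 = 1 - (∑ i, |x i|) ^ 2 / ((d : ℝ) * ‖x‖ ^ 2)
      ∧ ‖x - Cx‖ ^ 2 / ‖x‖ ^ 2 ≤ 1 - 1 / (d : ℝ)
      ∧ (‖x - Cx‖ ^ 2 / ‖x‖ ^ 2 = 1 - 1 / (d : ℝ) ↔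
          ∃ j, ∀ i, i ≠ j → x i = 0)
      ∧ (‖x - Cx‖ = 0 ↔ ∀ i j, |x i| = |x j|) := by
  intro Cx hC
  set L : ℝ := ∑ i, |x i| with hL
  have hd' : (0:ℝ) < d := by exact_mod_cast hd
  have hdne : (d:ℝ) ≠ 0 := ne_of_gt hd'
  have hxnorm : (0:ℝ) < ‖x‖ := norm_pos_iff.mpr hx
  have hN : (0:ℝ) < ‖x‖ ^ 2 := by positivity
  have hs2 : ∀ i, s i ^ 2 = 1 := fun i => by rcases hs i with h | h <;> rw [h] <;> ring
  have hnormsq : ∀ y : EuclideanSpace ℝ (Fin d), ‖y‖ ^ 2 = ∑ i, y i ^ 2 := by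
    intro y
    rw [EuclideanSpace.norm_eq, Real.sq_sqrt (by positivity)]
    simp [sq_abs]
  have hCxi : ∀ i, (x - Cx) i = x i - L / d * s i := by
    intro i; simp [hC]
  have hNsum : ‖x‖ ^ 2 = ∑ i, x i ^ 2 := hnormsq x
  have habs : ∑ i, x i ^ 2 = ∑ i, |x i| ^ 2 := by simp [sq_abs]
  -- key identity : ‖x - Cx‖² = ‖x‖² - L²/d
  have key : ‖x - Cx‖ ^ 2 = ‖x‖ ^ 2 - L ^ 2 / d := by
    rw [hnormsq, hNsum]
    have expand : ∀ i, (x - Cx) i ^ 2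
        = x i ^ 2 - 2 * (L / d) * (s i * x i) + (L / d) ^ 2 * s i ^ 2 := by
      intro i; rw [hCxi i]; ring
    simp_rw [expand, hsx, hs2, mul_one]
    rw [Finset.sum_add_distrib, Finset.sum_sub_distrib, ← Finset.mul_sum, ← hL,
      Finset.sum_const, Finset.card_univ, Fintype.card_fin, nsmul_eq_mul]
    field_simp
    ring
  -- main equation
  have eq1 : ‖x - Cx‖ ^ 2 / ‖x‖ ^ 2 = 1 - L ^ 2 / ((d : ℝ) * ‖x‖ ^ 2) := by
    rw [key]
    field_simp
  -- ‖x‖² ≤ L²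
  have hNL : ‖x‖ ^ 2 ≤ L ^ 2 := by
    rw [hNsum, habs]
    exact Finset.sum_sq_le_sq_sum_of_nonneg (fun i _ => abs_nonneg _)
  -- inequality
  have ineq : ‖x - Cx‖ ^ 2 / ‖x‖ ^ 2 ≤ 1 - 1 / (d : ℝ) := by
    rw [eq1]
    have h1 : (1:ℝ) / d = ‖x‖ ^ 2 / ((d : ℝ) * ‖x‖ ^ 2) := by field_simp
    rw [h1]
    have h2 : ‖x‖ ^ 2 / ((d : ℝ) * ‖x‖ ^ 2) ≤ L ^ 2 / ((d : ℝ) * ‖x‖ ^ 2) :=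
      div_le_div_of_nonneg_right hNL (by positivity)
    linarith
  -- decomposition of L² into diagonal + off-diagonal
  have decomp : L ^ 2 = (∑ i, |x i| ^ 2) + ∑ i, ∑ j ∈ Finset.univ.erase i, |x i| * |x j| := by
    rw [hL, sq, Finset.sum_mul_sum, ← Finset.sum_add_distrib]
    refine Finset.sum_congr rfl fun i _ => ?_
    rw [← Finset.sum_erase_add _ _ (Finset.mem_univ i), ← sq]
    ring
  have hoff_nonneg : (0:ℝ) ≤ ∑ i, ∑ j ∈ Finset.univ.erase i, |x i| * |x j| :=
    Finset.sum_nonneg fun i _ => Finset.sum_nonneg fun j _ =>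
      mul_nonneg (abs_nonneg _) (abs_nonneg _)
  obtain ⟨j₀, hj₀⟩ : ∃ j, x j ≠ 0 := by
    by_contra h
    push_neg at h
    exact hx (by ext i; exact h i)
  -- equality iff single support
  have eqiff : ‖x - Cx‖ ^ 2 / ‖x‖ ^ 2 = 1 - 1 / (d : ℝ) ↔ ∃ j, ∀ i, i ≠ j → x i = 0 := by
    rw [eq1]
    constructor
    · intro h
      have h2 : L ^ 2 / ((d : ℝ) * ‖x‖ ^ 2) = 1 / (d : ℝ) := by linarith
      have hLN : L ^ 2 = ‖x‖ ^ 2 := by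
        field_simp at h2
        have := mul_right_cancel₀ hdne (by rw [h2] : L ^ 2 * d = ‖x‖ ^ 2 * d)
        exact this
      have hzero : ∑ i, ∑ j ∈ Finset.univ.erase i, |x i| * |x j| = 0 := by
        rw [hNsum, habs] at hLN
        linarith [decomp]
      have hterm : ∀ i ∈ Finset.univ (α := Fin d), ∀ j ∈ Finset.univ.erase i,
          |x i| * |x j| = 0 := by
        intro i _ j hj
        have h1 := (Finset.sum_eq_zero_iff_of_nonneg fun i _ =>
          Finset.sum_nonneg fun j _ => mul_nonneg (abs_nonneg _) (abs_nonneg _)).mp hzero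
        have h2 := (Finset.sum_eq_zero_iff_of_nonneg fun j _ =>
          mul_nonneg (abs_nonneg _) (abs_nonneg _)).mp (h1 i (Finset.mem_univ i))
        exact h2 j hj
      refine ⟨j₀, fun i hi => ?_⟩
      have := hterm i (Finset.mem_univ i) j₀ (Finset.mem_erase.mpr ⟨Ne.symm hi, Finset.mem_univ j₀⟩)
      rcases mul_eq_zero.mp this with h | h
      · exact abs_eq_zero.mp h
      · exact absurd (abs_eq_zero.mp h) hj₀
    · rintro ⟨j, hj⟩
      have hLj : L = |x j| := by
        rw [hL]
        exact Finset.sum_eq_single_of_mem j (Finset.mem_univ j)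
          (fun i _ hij => by rw [hj i hij, abs_zero])
      have hNj : ‖x‖ ^ 2 = x j ^ 2 := by
        rw [hNsum]
        exact Finset.sum_eq_single_of_mem j (Finset.mem_univ j)
          (fun i _ hij => by rw [hj i hij]; ring)
      have : L ^ 2 = ‖x‖ ^ 2 := by rw [hLj, hNj, sq_abs]
      rw [this]
      field_simp
  -- zero error iff all |x i| equal
  have hSid : ∑ i, ∑ j, (|x i| - |x j|) ^ 2
      = 2 * ((d : ℝ) * ∑ i, |x i| ^ 2 - L ^ 2) := by
    have expand : ∀ i j : Fin d, (|x i| - |x j|) ^ 2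
        = |x i| ^ 2 + |x j| ^ 2 - 2 * (|x i| * |x j|) := fun i j => by ring
    simp_rw [expand, Finset.sum_sub_distrib, Finset.sum_add_distrib, Finset.sum_const,
      Finset.card_univ, Fintype.card_fin, nsmul_eq_mul, ← Finset.mul_sum, ← Finset.sum_mul,
      ← hL]
    ring
  have zeroiff : ‖x - Cx‖ = 0 ↔ ∀ i j, |x i| = |x j| := by
    constructor
    · intro h
      have h2 : ‖x - Cx‖ ^ 2 = 0 := by rw [h]; ring
      rw [key] at h2
      have hdN : (d : ℝ) * ‖x‖ ^ 2 = L ^ 2 := by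
        field_simp at h2
        linarith
      have hS0 : ∑ i, ∑ j, (|x i| - |x j|) ^ 2 = 0 := by
        rw [hSid, ← habs, ← hNsum, hdN]
        ring
      intro i j
      have h1 := (Finset.sum_eq_zero_iff_of_nonneg fun i _ =>
        Finset.sum_nonneg fun j _ => sq_nonneg _).mp hS0
      have h2 := (Finset.sum_eq_zero_iff_of_nonneg fun j _ => sq_nonneg _).mp
        (h1 i (Finset.mem_univ i))
      have := h2 j (Finset.mem_univ j)
      have := sq_eq_zero_iff.mp this
      linarith
    · intro h
      have hall : ∀ i, |x i| = |x j₀| := fun i => h i j₀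
      have hLv : L = d * |x j₀| := by
        rw [hL]
        simp_rw [hall]
        rw [Finset.sum_const, Finset.card_univ, Fintype.card_fin, nsmul_eq_mul]
      have hNv : ‖x‖ ^ 2 = d * |x j₀| ^ 2 := by
        rw [hNsum, habs]
        simp_rw [hall]
        rw [Finset.sum_const, Finset.card_univ, Fintype.card_fin, nsmul_eq_mul]
      have : ‖x - Cx‖ ^ 2 = 0 := by
        rw [key, hLv, hNv]
        field_simp
        ring
      have := sq_eq_zero_iff.mp this
      exact this
  exact ⟨eq1, ineq, eqiff, zeroiff⟩
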